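/- arXiv:2410.15706 — 2 statements merged into one kernel-verified Lean document; each statement's English description precedes it below -/
import Mathlib

section
/- (Identifiability of the interventional density, Theorem A.1, density form.) Under the factorized joint density f, fix x ∈ ℝ^n with 0 < M < ∞ where M := ∫_{ℝ^m} fZ(z)·fX(x,z) dz, and fix t ∈ ℝ with fT(t,z) > 0 for all z ∈ ℝ^m and fX(x,z) > 0, fZ(z) > 0 for all z. Then for every y ∈ ℝ, the backdoor adjustment formula computed purely from observational conditional densities recovers the interventional outcome density: ∫_{ℝ^m} [ f(x,z,t,y) / ∫_ℝ f(x,z,t,y') dy' ] · [ (∫_ℝ ∫_ℝ f(x,z,t',y') dt' dy') / (∫_{ℝ^m} ∫_ℝ ∫_ℝ f(x,z',t',y') dz' dt' dy') ] dz = (1/M) · ∫_{ℝ^m} fY(y,z,t)·fZ(z)·fX(x,z) dz. In particular the right-hand side does not depend on the treatment-assignment density fT. -/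
open MeasureTheory

/-- Identifiability of the interventional density (Theorem A.1, density form):
the backdoor adjustment formula computed purely from observational conditional
densities recovers the interventional outcome density
`p(y | x, do(t)) = (1/M) * ∫ z, fY y z t * fZ z * fX x z`. -/
theorem interventional_density_identifiable
    (m n : ℕ) (hm : 1 ≤ m) (hn : 1 ≤ n)
    (fZ : (Fin m → ℝ) → ℝ)
    (fX : (Fin n → ℝ) → (Fin m → ℝ) → ℝ)
    (fT : ℝ → (Fin m → ℝ) → ℝ)
    (fY : ℝ → (Fin m → ℝ) → ℝ → ℝ)
    (hfZmeas : Measurable fZ) (hfZnn : ∀ z, 0 ≤ fZ z)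
    (hfZ : ∫ z, fZ z = 1)
    (hfXmeas : Measurable (fun p : (Fin n → ℝ) × (Fin m → ℝ) => fX p.1 p.2))
    (hfXnn : ∀ x z, 0 ≤ fX x z) (hfX : ∀ z, ∫ x, fX x z = 1)
    (hfTmeas : Measurable (fun p : ℝ × (Fin m → ℝ) => fT p.1 p.2))
    (hfTnn : ∀ t z, 0 ≤ fT t z) (hfT : ∀ z, ∫ t, fT t z = 1)
    (hfYmeas : Measurable (fun p : ℝ × (Fin m → ℝ) × ℝ => fY p.1 p.2.1 p.2.2))
    (hfYnn : ∀ y z t, 0 ≤ fY y z t) (hfY : ∀ z t, ∫ y, fY y z t = 1)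
    (f : (Fin n → ℝ) → (Fin m → ℝ) → ℝ → ℝ → ℝ)
    (hf : ∀ x z t y, f x z t y = fZ z * fX x z * fT t z * fY y z t)
    (x : Fin n → ℝ)
    (M : ℝ) (hM : M = ∫ z, fZ z * fX x z)
    (hMpos : 0 < M)
    (hMfin : Integrable (fun z => fZ z * fX x z))
    (t : ℝ)
    (hfTpos : ∀ z, 0 < fT t z)
    (hfXpos : ∀ z, 0 < fX x z)
    (hfZpos : ∀ z, 0 < fZ z) :
    ∀ y : ℝ,
      (∫ z : Fin m → ℝ,
          (f x z t y / ∫ y' : ℝ, f x z t y') *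
            ((∫ t' : ℝ, ∫ y' : ℝ, f x z t' y') /
              (∫ z' : Fin m → ℝ, ∫ t' : ℝ, ∫ y' : ℝ, f x z' t' y'))) =
        (1 / M) * ∫ z : Fin m → ℝ, fY y z t * fZ z * fX x z := by
  intro y
  have h1 : ∀ (z : Fin m → ℝ) (t' : ℝ), (∫ y' : ℝ, f x z t' y')
      = fZ z * fX x z * fT t' z := by
    intro z t'
    simp only [hf]
    rw [MeasureTheory.integral_const_mul, hfY, mul_one]
  have h2 : ∀ (z : Fin m → ℝ), (∫ t' : ℝ, ∫ y' : ℝ, f x z t' y')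
      = fZ z * fX x z := by
    intro z
    simp only [h1]
    rw [MeasureTheory.integral_const_mul, hfT, mul_one]
  have h3 : (∫ z' : Fin m → ℝ, ∫ t' : ℝ, ∫ y' : ℝ, f x z' t' y') = M := by
    simp only [h2]
    rw [hM]
  have hpt : ∀ z : Fin m → ℝ,
      (f x z t y / ∫ y' : ℝ, f x z t y') *
        ((∫ t' : ℝ, ∫ y' : ℝ, f x z t' y') /
          (∫ z' : Fin m → ℝ, ∫ t' : ℝ, ∫ y' : ℝ, f x z' t' y'))
      = (fY y z t * fZ z * fX x z) / M := by
    intro z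
    rw [h1, h2, h3, hf]
    have hc : fZ z * fX x z * fT t z ≠ 0 :=
      ne_of_gt (mul_pos (mul_pos (hfZpos z) (hfXpos z)) (hfTpos z))
    field_simp
    rw [mul_div_right_comm, mul_div_cancel_right₀ _ (hfTpos z).ne']
  rw [integral_congr_ae (Filter.Eventually.of_forall hpt),
    MeasureTheory.integral_div, div_eq_mul_inv, one_div, mul_comm]
end

section
/- (Identifiability of the individual dose-response curve.) Under the factorized joint density f, fix x ∈ ℝ^n with 0 < M < ∞ where M := ∫_{ℝ^m} fZ(z)·fX(x,z) dz, and t ∈ ℝ with fZ(z) > 0, fX(x,z) > 0 and fT(t,z) > 0 for all z. Assume ∫_{ℝ^m} ∫_ℝ |y| · fY(y,z,t) · fZ(z) · fX(x,z) dy dz < ∞. Then the dose-response value μ(x,t) := ∫_ℝ y · p(y|x,do(t)) dy equals ∫_{ℝ^m} μ_Y(x,t,z) · π(z|x) dz, where μ_Y(x,t,z) := (∫_ℝ y · f(x,z,t,y) dy) / (∫_ℝ f(x,z,t,y) dy) is the observational conditional mean of Y given (X,Z,T) = (x,z,t) and π(z|x) := fZ(z)·fX(x,z)/M is the observational conditional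 density of Z given X = x; hence μ(x,t) is determined by the joint distribution p(X,Z,T,Y). -/
open MeasureTheory

/-- Identifiability of the individual dose-response curve:
`μ(x,t) = ∫ y, y * p(y|x,do(t)) dy` equals
`∫ z, μ_Y(x,t,z) * π(z|x) dz`, where `μ_Y` is the observational conditional mean of `Y`
given `(X,Z,T) = (x,z,t)` and `π(z|x) = fZ z * fX x z / M` is the observational
conditional density of `Z` given `X = x`. -/
theorem dose_response_curve_identifiable
    (m n : ℕ) (hm : 1 ≤ m) (hn : 1 ≤ n)
    (fZ : (Fin m → ℝ) → ℝ)
    (fX : (Fin n → ℝ) → (Fin m → ℝ) → ℝ)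
    (fT : ℝ → (Fin m → ℝ) → ℝ)
    (fY : ℝ → (Fin m → ℝ) → ℝ → ℝ)
    (hfZmeas : Measurable fZ) (hfZnn : ∀ z, 0 ≤ fZ z)
    (hfZ : ∫ z, fZ z = 1)
    (hfXmeas : Measurable (fun p : (Fin n → ℝ) × (Fin m → ℝ) => fX p.1 p.2))
    (hfXnn : ∀ x z, 0 ≤ fX x z) (hfX : ∀ z, ∫ x, fX x z = 1)
    (hfTmeas : Measurable (fun p : ℝ × (Fin m → ℝ) => fT p.1 p.2))
    (hfTnn : ∀ t z, 0 ≤ fT t z) (hfT : ∀ z, ∫ t, fT t z = 1)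
    (hfYmeas : Measurable (fun p : ℝ × (Fin m → ℝ) × ℝ => fY p.1 p.2.1 p.2.2))
    (hfYnn : ∀ y z t, 0 ≤ fY y z t) (hfY : ∀ z t, ∫ y, fY y z t = 1)
    (f : (Fin n → ℝ) → (Fin m → ℝ) → ℝ → ℝ → ℝ)
    (hf : ∀ x z t y, f x z t y = fZ z * fX x z * fT t z * fY y z t)
    (x : Fin n → ℝ)
    (M : ℝ) (hM : M = ∫ z, fZ z * fX x z)
    (hMpos : 0 < M)
    (hMfin : Integrable (fun z => fZ z * fX x z))
    (t : ℝ)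
    (hfZpos : ∀ z, 0 < fZ z)
    (hfXpos : ∀ z, 0 < fX x z)
    (hfTpos : ∀ z, 0 < fT t z)
    (hint : Integrable (fun zy : (Fin m → ℝ) × ℝ =>
      |zy.2| * fY zy.2 zy.1 t * fZ zy.1 * fX x zy.1)) :
    (∫ y : ℝ, y * ((1 / M) * ∫ z : Fin m → ℝ, fY y z t * fZ z * fX x z)) =
      ∫ z : Fin m → ℝ,
        ((∫ y : ℝ, y * f x z t y) / (∫ y : ℝ, f x z t y)) *
          (fZ z * fX x z / M) := by
  -- g : product integrand
  set g : (Fin m → ℝ) × ℝ → ℝ := fun zy => zy.2 * fY zy.2 zy.1 t * fZ zy.1 * fX x zy.1 with hg_def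
  have hgmeas : Measurable g := by
    apply Measurable.mul
    apply Measurable.mul
    apply Measurable.mul
    · exact measurable_snd
    · exact hfYmeas.comp (by fun_prop : Measurable
        (fun p : (Fin m → ℝ) × ℝ => (p.2, p.1, t)))
    · exact hfZmeas.comp measurable_fst
    · exact hfXmeas.comp (by fun_prop : Measurable
        (fun p : (Fin m → ℝ) × ℝ => (x, p.1)))
  have hgint : Integrable g := by
    refine hint.mono' hgmeas.aestronglyMeasurable (Filter.Eventually.of_forall ?_)
    intro zy
    simp only [hg_def, Real.norm_eq_abs]
    rw [abs_mul, abs_mul, abs_mul]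
    rw [abs_of_nonneg (hfYnn _ _ _), abs_of_nonneg (hfZnn _), abs_of_nonneg (hfXnn _ _)]
  -- Fubini
  have hswap : (∫ z, ∫ y, g (z, y)) = ∫ y, ∫ z, g (z, y) :=
    integral_integral_swap hgint
  have hLHS : (∫ y : ℝ, y * ((1 / M) * ∫ z : Fin m → ℝ, fY y z t * fZ z * fX x z))
      = (1 / M) * ∫ z, ∫ y, g (z, y) := by
    rw [hswap, ← integral_const_mul]
    congr 1; ext y
    rw [mul_left_comm]
    congr 1
    rw [← integral_const_mul]
    congr 1; ext z; simp only [hg_def]; ring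
  rw [hLHS]
  -- RHS simplification
  have hRHS : ∀ z, ((∫ y : ℝ, y * f x z t y) / (∫ y : ℝ, f x z t y)) * (fZ z * fX x z / M)
      = (1 / M) * ∫ y, g (z, y) := by
    intro z
    have hc : fZ z * fX x z * fT t z ≠ 0 :=
      ne_of_gt (mul_pos (mul_pos (hfZpos z) (hfXpos z)) (hfTpos z))
    have h1 : (∫ y : ℝ, f x z t y) = fZ z * fX x z * fT t z := by
      simp only [hf]
      rw [integral_const_mul, hfY, mul_one]
    have h2 : (∫ y : ℝ, y * f x z t y)
        = fZ z * fX x z * fT t z * ∫ y, y * fY y z t := by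
      simp only [hf]
      rw [← integral_const_mul]
      congr 1; ext y; ring
    rw [h1, h2, mul_comm (fZ z * fX x z * fT t z) (∫ y, y * fY y z t),
      mul_div_assoc, div_self hc, mul_one]
    have h3 : (∫ y, g (z, y)) = (∫ y, y * fY y z t) * (fZ z * fX x z) := by
      rw [← integral_mul_const]
      congr 1; ext y; simp only [hg_def]; ring
    rw [h3]; ring
  simp only [hRHS]
  rw [integral_const_mul]
end
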